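/- arXiv:1711.05620 — 2 statements merged into one kernel-verified Lean document; each statement's English description precedes it below -/
import Mathlib

section
/- Define g : [0,∞) → R by g(ξ) = ξ^{1/3}((1+√(1+ξ))^{1/3} + (1−√(1+ξ))^{1/3})·(1 − (ξ^{1/3}/2)((1+√(1+ξ))^{1/3} + (1−√(1+ξ))^{1/3})). Then g(ξ) → (2/3)² as ξ → +∞. -/
open Real Filter

/-- Real cube root: `cbrt x = sign(x) |x|^{1/3}`. -/
noncomputable def cbrt (x : ℝ) : ℝ := Real.sign x * |x| ^ ((1 : ℝ)/3)

/-- `h(ξ) = ξ^{1/3}((1+√(1+ξ))^{1/3} + (1-√(1+ξ))^{1/3})` with real cube roots. -/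
noncomputable def hFun (ξ : ℝ) : ℝ :=
  cbrt ξ * (cbrt (1 + Real.sqrt (1 + ξ)) + cbrt (1 - Real.sqrt (1 + ξ)))

/-- `g(ξ) = h(ξ)(1 - h(ξ)/2)`. -/
noncomputable def gFun (ξ : ℝ) : ℝ := hFun ξ * (1 - hFun ξ / 2)

lemma cbrt_of_pos {x : ℝ} (hx : 0 < x) : cbrt x = x ^ ((1:ℝ)/3) := by
  rw [cbrt, Real.sign_of_pos hx, abs_of_pos hx, one_mul]

lemma cbrt_of_neg {x : ℝ} (hx : x < 0) : cbrt x = -((-x) ^ ((1:ℝ)/3)) := by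
  rw [cbrt, Real.sign_of_neg hx, abs_of_neg hx, neg_one_mul]

lemma cube_rpow {x : ℝ} (hx : 0 ≤ x) : (x ^ ((1:ℝ)/3)) ^ (3:ℕ) = x := by
  rw [← Real.rpow_natCast (x ^ ((1:ℝ)/3)) 3, ← Real.rpow_mul hx]
  norm_num

lemma sqrt_atTop : Tendsto Real.sqrt atTop atTop := by
  refine tendsto_atTop_atTop.2 fun b => ⟨(max 0 b) ^ 2, fun x hx => ?_⟩
  have h0 : (0:ℝ) ≤ max 0 b := le_max_left 0 b
  have hx0 : 0 ≤ x := le_trans (by positivity) hx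
  have := (Real.le_sqrt h0 hx0).2 hx
  exact le_trans (le_max_right 0 b) this

lemma tendsto_sqrt : Tendsto (fun ξ : ℝ => Real.sqrt (1 + ξ)) atTop atTop :=
  sqrt_atTop.comp (tendsto_atTop_add_const_left atTop 1 tendsto_id)

lemma tendsto_ratio :
    Tendsto (fun ξ : ℝ => (Real.sqrt (1 + ξ) + 1) / (Real.sqrt (1 + ξ) - 1)) atTop (nhds 1) := by
  have h1 : Tendsto (fun s : ℝ => (s + 1) / (s - 1)) atTop (nhds 1) := by
    have h2 : Tendsto (fun s : ℝ => 1 + 2 / (s - 1)) atTop (nhds (1 + 0)) := by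
      exact tendsto_const_nhds.add
        (tendsto_const_nhds.div_atTop (tendsto_atTop_add_const_right atTop (-1) tendsto_id))
    rw [add_zero] at h2
    refine h2.congr' ?_
    filter_upwards [eventually_gt_atTop (1:ℝ)] with s hs
    have : s - 1 ≠ 0 := by linarith
    field_simp
    ring
  exact h1.comp tendsto_sqrt

lemma tendsto_h : Tendsto hFun atTop (nhds (2/3)) := by
  have hr : Tendsto (fun ξ : ℝ =>
      ((Real.sqrt (1 + ξ) + 1) / (Real.sqrt (1 + ξ) - 1)) ^ ((1:ℝ)/3)) atTop (nhds 1) := by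
    have hc : ContinuousAt (fun x : ℝ => x ^ ((1:ℝ)/3)) 1 :=
      Real.continuousAt_rpow_const 1 _ (Or.inl one_ne_zero)
    have := hc.tendsto.comp tendsto_ratio
    simpa [Function.comp_def] using this
  have hF : ContinuousAt (fun t : ℝ => 2 * t / (t ^ 2 + t + 1)) 1 := by
    apply ContinuousAt.div
    · fun_prop
    · fun_prop
    · norm_num
  have hcomp := hF.tendsto.comp hr
  have hval : (2 * (1:ℝ) / ((1:ℝ) ^ 2 + 1 + 1)) = 2/3 := by norm_num
  rw [hval] at hcomp
  refine hcomp.congr' ?_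
  filter_upwards [eventually_gt_atTop (1:ℝ)] with ξ hξ
  -- notation
  set s := Real.sqrt (1 + ξ) with hs
  have hs1 : 1 < s := by
    have : Real.sqrt 1 < Real.sqrt (1 + ξ) := by
      apply Real.sqrt_lt_sqrt <;> linarith
    simpa using this
  have hsq : s ^ 2 = 1 + ξ := Real.sq_sqrt (by linarith)
  set a := (s + 1) ^ ((1:ℝ)/3) with ha
  set b := (s - 1) ^ ((1:ℝ)/3) with hb
  have hapos : 0 < a := Real.rpow_pos_of_pos (by linarith) _
  have hbpos : 0 < b := Real.rpow_pos_of_pos (by linarith) _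
  have ha3 : a ^ (3:ℕ) = s + 1 := cube_rpow (by linarith)
  have hb3 : b ^ (3:ℕ) = s - 1 := cube_rpow (by linarith)
  have hξpos : 0 < ξ := by linarith
  -- compute hFun
  have hcξ : cbrt ξ = a * b := by
    rw [cbrt_of_pos hξpos, ← Real.mul_rpow (by linarith) (by linarith)]
    congr 1
    nlinarith
  have hc1 : cbrt (1 + s) = a := by
    rw [cbrt_of_pos (by linarith)]
    congr 1
    ring
  have hc2 : cbrt (1 - s) = -b := by
    rw [cbrt_of_neg (by linarith)]
    congr 2
    ring
  have hrval : ((s + 1) / (s - 1)) ^ ((1:ℝ)/3) = a / b :=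
    Real.div_rpow (by linarith) (by linarith) _
  show 2 * ((s + 1) / (s - 1)) ^ ((1:ℝ)/3) /
      ((((s + 1) / (s - 1)) ^ ((1:ℝ)/3)) ^ 2 + ((s + 1) / (s - 1)) ^ ((1:ℝ)/3) + 1) = hFun ξ
  rw [hrval, hFun, hcξ, hc1, hc2]
  have hden : (a/b)^2 + a/b + 1 ≠ 0 := by positivity
  rw [div_eq_iff hden]
  field_simp
  ring_nf
  linear_combination hb3 - ha3

/-- `g(ξ) → (2/3)²` as `ξ → +∞`. -/
theorem stmt_3 : Tendsto gFun atTop (nhds ((2/3 : ℝ) ^ 2)) := by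
  have h := tendsto_h
  have : Tendsto gFun atTop (nhds ((2/3) * (1 - (2/3)/2))) :=
    h.mul (tendsto_const_nhds.sub (h.div_const 2))
  convert this using 2
  norm_num
end

section
/- The function ξ ↦ ξ^{1/3}((1+√(1+ξ))^{1/3} + (1−√(1+ξ))^{1/3}) is a bounded function from [0,∞) to [0, 2/3), and it tends to 2/3 as ξ → +∞. -/
open Real Filter

lemma cbrt_of_nonneg {x : ℝ} (hx : 0 ≤ x) : cbrt x = x ^ ((1:ℝ)/3) := by
  rcases hx.eq_or_lt with h | h
  · simp [cbrt, ← h, Real.zero_rpow (by norm_num : (1:ℝ)/3 ≠ 0)]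
  · rw [cbrt, Real.sign_of_pos h, abs_of_pos h, one_mul]

lemma cbrt_neg' (x : ℝ) : cbrt (-x) = - cbrt x := by
  simp [cbrt, Real.sign_neg, abs_neg, neg_mul]

noncomputable def dF (ξ : ℝ) : ℝ :=
  (1 + Real.sqrt (1+ξ)) ^ ((1:ℝ)/3) - (Real.sqrt (1+ξ) - 1) ^ ((1:ℝ)/3)

lemma key {ξ : ℝ} (hξ : 0 ≤ ξ) :
    hFun ξ = (2 - dF ξ ^ 3)/3 ∧ 0 < dF ξ ∧ dF ξ ^ 3 ≤ 2 ∧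
    dF ξ ≤ 2 * (1 + Real.sqrt (1+ξ)) ^ (-(2:ℝ)/3) := by
  set s := Real.sqrt (1+ξ) with hs
  have hs0 : 0 ≤ s := Real.sqrt_nonneg _
  have hs2 : s ^ 2 = 1 + ξ := Real.sq_sqrt (by linarith)
  have hs1 : 1 ≤ s := by nlinarith
  set a := (1 + s) ^ ((1:ℝ)/3) with ha
  set b := (s - 1) ^ ((1:ℝ)/3) with hb
  have hann : (0:ℝ) ≤ 1 + s := by linarith
  have hbnn : (0:ℝ) ≤ s - 1 := by linarith
  have ha0 : 0 ≤ a := Real.rpow_nonneg hann _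
  have hb0 : 0 ≤ b := Real.rpow_nonneg hbnn _
  have ha3 : a ^ 3 = 1 + s := by
    rw [ha, ← Real.rpow_natCast _ 3, ← Real.rpow_mul hann]
    norm_num
  have hb3 : b ^ 3 = s - 1 := by
    rw [hb, ← Real.rpow_natCast _ 3, ← Real.rpow_mul hbnn]
    norm_num
  have hcbξ : cbrt ξ = a * b := by
    rw [cbrt_of_nonneg hξ, show ξ = (1+s)*(s-1) by nlinarith, Real.mul_rpow hann hbnn]
  have hc1 : cbrt (1 + s) = a := cbrt_of_nonneg hann
  have hc2 : cbrt (1 - s) = -b := by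
    rw [show (1:ℝ) - s = -(s-1) by ring, cbrt_neg', cbrt_of_nonneg hbnn]
  have hh : hFun ξ = a * b * (a - b) := by
    rw [hFun, hcbξ, hc1, hc2]; ring
  have h2 : a ^ 3 - b ^ 3 = 2 := by rw [ha3, hb3]; ring
  have hd : dF ξ = a - b := rfl
  have hba : b ≤ a := Real.rpow_le_rpow hbnn (by linarith) (by norm_num)
  have hdpos : 0 < a - b := by
    rcases hba.eq_or_lt with h | h
    · exfalso; rw [h] at h2; nlinarith
    · linarith
  refine ⟨?_, by rw [hd]; exact hdpos, ?_, ?_⟩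
  · rw [hh, hd]; linear_combination h2 / 3
  · rw [hd]; nlinarith [mul_nonneg ha0 hb0]
  · have hai : (1 + s) ^ (-(2:ℝ)/3) = (a^2)⁻¹ := by
      rw [ha, ← Real.rpow_natCast _ 2, ← Real.rpow_mul hann,
          ← Real.rpow_neg hann]
      norm_num
    rw [hd, hai]
    have hapos : 0 < a := by nlinarith
    have ha2pos : 0 < a ^ 2 := by positivity
    rw [← div_eq_mul_inv, le_div_iff₀ ha2pos]
    nlinarith [mul_nonneg (mul_nonneg hb0 hdpos.le) (by linarith : (0:ℝ) ≤ a + b)]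

/-- `h` maps `[0,∞)` into `[0, 2/3)` and tends to `2/3` at `+∞`. -/
theorem stmt_7 :
    (∀ ξ : ℝ, 0 ≤ ξ → hFun ξ ∈ Set.Ico (0 : ℝ) (2/3))
    ∧ Tendsto hFun atTop (nhds (2/3)) := by
  constructor
  · intro ξ hξ
    obtain ⟨heq, hdpos, hd2, -⟩ := key hξ
    rw [heq]
    refine ⟨by linarith, ?_⟩
    have h3 : 0 < dF ξ ^ 3 := pow_pos hdpos 3
    linarith
  · have hsq : Tendsto (fun ξ : ℝ => 2 * (1 + Real.sqrt (1+ξ)) ^ (-(2:ℝ)/3)) atTop (nhds 0) := by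
      have h1 : Tendsto (fun ξ : ℝ => 1 + Real.sqrt (1+ξ)) atTop atTop := by
        apply tendsto_atTop_add_const_left
        have hsqrt : Tendsto Real.sqrt atTop atTop := by
          exact (tendsto_rpow_atTop (by norm_num : (0:ℝ) < 1/2)).congr
            (fun x => (Real.sqrt_eq_rpow x).symm)
        exact hsqrt.comp (tendsto_atTop_add_const_left _ 1 tendsto_id)
      have h2 := (tendsto_rpow_neg_atTop (by norm_num : (0:ℝ) < 2/3)).comp h1
      have h3 := h2.const_mul 2
      simp only [mul_zero] at h3
      convert h3 using 2 with ξ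
      norm_num [Function.comp]
    have hd0 : Tendsto dF atTop (nhds 0) := by
      refine squeeze_zero' ?_ ?_ hsq
      · filter_upwards [eventually_ge_atTop 0] with ξ hξ using (key hξ).2.1.le
      · filter_upwards [eventually_ge_atTop 0] with ξ hξ using (key hξ).2.2.2
    have hmain : Tendsto (fun ξ => (2 - dF ξ ^ 3)/3) atTop (nhds (2/3)) := by
      have h := ((tendsto_const_nhds (x := (2:ℝ))).sub (hd0.pow 3)).div_const 3
      norm_num at h
      exact h
    refine hmain.congr' ?_
    filter_upwards [eventually_ge_atTop 0] with ξ hξ using ((key hξ).1).symm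
end
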